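/- For every real constant c < 1/4 there exist an integer k ≥ 1, real numbers a = x₀ < x₁ < ⋯ < x_k = b, real numbers α₀, α₁, …, α_{k+1} with α₀ = a, α_{k+1} = b and α_i ∈ [x_{i−1}, x_i] for i = 1, …, k, a function f : ℝ → ℝ continuous on [a,b] and differentiable on (a,b), and M > 0 with |f'(t)| ≤ M for all t ∈ (a,b), such that |∫_a^b f(t) dt − ∑_{i=0}^{k} (α_{i+1} − α_i)·f(x_i)| > M·( c·∑_{i=0}^{k−1} (x_{i+1} − x_i)² + ∑_{i=0}^{k−1} (α_{i+1} − (x_i + x_{i+1})/2)² ). (For instance k = 1, f(t) = t, α₁ = b gives left-hand side (b−a)²/2 and right-hand side (c + 1/4)(b−a)² with M = 1.) -/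

import Mathlib

/-- Sharpness of the constant 1/4 in the continuous generalized
Ostrowski inequality for k points. -/
theorem generalized_ostrowski_continuous_sharp (c : ℝ) (hc : c < 1 / 4) :
    ∃ (k : ℕ) (x α : ℕ → ℝ) (f f' : ℝ → ℝ) (M : ℝ),
      1 ≤ k ∧
      (∀ i < k, x i < x (i + 1)) ∧
      α 0 = x 0 ∧ α (k + 1) = x k ∧
      (∀ i < k, α (i + 1) ∈ Set.Icc (x i) (x (i + 1))) ∧
      ContinuousOn f (Set.Icc (x 0) (x k)) ∧
      (∀ t ∈ Set.Ioo (x 0) (x k), HasDerivAt f (f' t) t) ∧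
      0 < M ∧
      (∀ t ∈ Set.Ioo (x 0) (x k), |f' t| ≤ M) ∧
      |(∫ t in (x 0)..(x k), f t) -
          ∑ i ∈ Finset.range (k + 1), (α (i + 1) - α i) * f (x i)| >
        M * (c * ∑ i ∈ Finset.range k, (x (i + 1) - x i) ^ 2 +
          ∑ i ∈ Finset.range k, (α (i + 1) - (x i + x (i + 1)) / 2) ^ 2) := by
  refine ⟨1, fun i => if i = 0 then 0 else 1, fun i => if i = 0 then 0 else 1,
    id, fun _ => 1, 1, le_refl 1, ?_, by norm_num, by norm_num, ?_, ?_, ?_, one_pos, ?_, ?_⟩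
  · intro i hi; interval_cases i; norm_num
  · intro i hi; interval_cases i; simp
  · exact continuousOn_id
  · intro t _; simpa using hasDerivAt_id t
  · intro t _; norm_num
  · have h1 : (∫ t in (0:ℝ)..1, t) = 1 / 2 := by
      simp [integral_id]
    norm_num [Finset.sum_range_succ, h1]
    linarith
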